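/- Let h_k(u) be defined by h_0 = 0, h_1 = 1, h_k = h_{k−1} + u·h_{k−2}, and for j ≥ 3 let u_j = −1/(4 cos²(π/j)). Then the derivative h_j'(u_j) is non-zero; explicitly, h_j'(u_j) = j·cos((j−1)π/j) / (2^{j−2}(1+4u_j)(cos(π/j))^{j−1}) ≠ 0. -/

import Mathlib

theorem stmt_16 (h : ℕ → Polynomial ℂ) (h0 : h 0 = 0) (h1 : h 1 = 1)
    (hrec : ∀ k, 2 ≤ k → h k = h (k - 1) + Polynomial.X * h (k - 2))
    (j : ℕ) (hj : 3 ≤ j)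
    (uj : ℂ) (huj : uj = ((-1 / (4 * Real.cos (Real.pi / j) ^ 2) : ℝ) : ℂ)) :
    (h j).derivative.eval uj =
        (j : ℂ) * ((Real.cos (((j : ℝ) - 1) * Real.pi / j) : ℝ) : ℂ) /
          (2 ^ (j - 2) * (1 + 4 * uj) * ((Real.cos (Real.pi / j) : ℝ) : ℂ) ^ (j - 1)) ∧
      (h j).derivative.eval uj ≠ 0 := by
  have hjR : (0:ℝ) < (j:ℝ) := by positivity
  have hjRne : (j:ℝ) ≠ 0 := ne_of_gt hjR
  have hjC : (j:ℂ) ≠ 0 := by exact_mod_cast hjRne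
  set θ : ℝ := Real.pi / j with hθdef
  have hθpos : 0 < θ := by positivity
  have hθlt : θ < Real.pi / 2 := by
    rw [hθdef]
    rw [div_lt_div_iff₀ hjR (by norm_num)]
    nlinarith [Real.pi_pos, show (3:ℝ) ≤ (j:ℝ) from by exact_mod_cast hj]
  clear_value θ
  have hθpi : θ < Real.pi := by linarith [Real.pi_pos]
  have hsin : 0 < Real.sin θ := Real.sin_pos_of_pos_of_lt_pi hθpos hθpi
  have hcos : 0 < Real.cos θ := Real.cos_pos_of_mem_Ioo ⟨by linarith, hθlt⟩
  set c : ℝ := Real.cos θ with hcdef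
  have hc2lt : c ^ 2 < 1 := by
    rw [hcdef]
    nlinarith [Real.sin_sq_add_cos_sq θ]
  clear_value c
  set C : ℂ := ((c:ℝ) : ℂ) with hCdef
  clear_value C
  have hcC : ((c:ℝ):ℂ) ≠ 0 := by
    simp only [ne_eq, Complex.ofReal_eq_zero]; exact ne_of_gt hcos
  have hC0 : C ≠ 0 := by rw [hCdef]; exact hcC
  have hujC : uj = -1 / (4 * C ^ 2) := by
    rw [huj, hCdef]; push_cast; ring
  have h1u : (1:ℂ) + 4 * uj = ((1 - 1 / c ^ 2 : ℝ) : ℂ) := by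
    rw [hujC, hCdef]; push_cast
    field_simp
    ring
  have h1une : (1:ℂ) + 4 * uj ≠ 0 := by
    rw [h1u]
    simp only [ne_eq, Complex.ofReal_eq_zero]
    intro hh
    have hcne : c ^ 2 ≠ 0 := by positivity
    have : c ^ 2 = 1 := by field_simp at hh; linarith
    linarith
  set α : ℂ := Complex.exp (θ * Complex.I) / (2 * C) with hαdef
  set β : ℂ := Complex.exp (-(θ * Complex.I)) / (2 * C) with hβdef
  clear_value α β
  have h2C0 : (2:ℂ) * C ≠ 0 := by simp [hC0]
  have hexps : Complex.exp (θ * Complex.I) + Complex.exp (-(θ * Complex.I)) = 2 * C := by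
    have hneg : -((θ:ℂ) * Complex.I) = ((-θ : ℝ) : ℂ) * Complex.I := by push_cast; ring
    rw [Complex.exp_mul_I, hneg, Complex.exp_mul_I]
    simp only [Complex.ofReal_neg, Complex.cos_neg, Complex.sin_neg,
      ← Complex.ofReal_cos, ← Complex.ofReal_sin]
    rw [hCdef, hcdef]
    ring
  have hsum : α + β = 1 := by
    rw [hαdef, hβdef, ← add_div, hexps, div_self h2C0]
  have hprod : α * β = -uj := by
    rw [hαdef, hβdef, div_mul_div_comm, ← Complex.exp_add, add_neg_cancel, Complex.exp_zero,
      hujC]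
    field_simp
    ring
  set s : ℂ := α - β with hsdef
  clear_value s
  have hβα : β = 1 - α := by linear_combination hsum
  have hujα : uj = α ^ 2 - α := by
    have hp := hprod
    rw [hβα] at hp
    linear_combination hp
  have hs2 : s ^ 2 = 1 + 4 * uj := by
    rw [hsdef, hβα, hujα]; ring
  have hsne : s ≠ 0 := by
    intro hh
    apply h1une
    rw [← hs2, hh]; ring
  -- main induction
  have key : ∀ n : ℕ,
      ((h n).eval uj * s = α ^ n - β ^ n ∧
        (h (n+1)).derivative.eval uj * s ^ 3
          = ((n:ℂ)+1) * (α ^ n + β ^ n) * s - 2 * (α ^ (n+1) - β ^ (n+1))) ∧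
      ((h (n+1)).eval uj * s = α ^ (n+1) - β ^ (n+1) ∧
        (h (n+2)).derivative.eval uj * s ^ 3
          = ((n:ℂ)+2) * (α ^ (n+1) + β ^ (n+1)) * s - 2 * (α ^ (n+2) - β ^ (n+2))) := by
    intro n
    induction n with
    | zero =>
      have h2 : h 2 = 1 := by
        rw [hrec 2 le_rfl]; norm_num [h0, h1]
      refine ⟨⟨by simp [h0], ?_⟩, ⟨by simp [h1, hsdef], ?_⟩⟩
      · have hd1 : (h (0+1)).derivative = 0 := by
          norm_num [h1]
        rw [hd1]
        simp only [Polynomial.eval_zero, zero_mul]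
        rw [hsdef]
        push_cast
        ring
      · have hd2 : (h (0+2)).derivative = 0 := by
          norm_num [h2]
        rw [hd2]
        simp only [Polynomial.eval_zero, zero_mul]
        rw [hsdef, hβα]
        push_cast
        ring
    | succ n ih =>
      obtain ⟨⟨hQ0, hR0⟩, ⟨hQ1, hR1⟩⟩ := ih
      refine ⟨⟨hQ1, by push_cast at hR1 ⊢; linear_combination hR1⟩, ?_, ?_⟩
      · -- Q (n+2)
        have hE : (h (n+2)).eval uj = (h (n+1)).eval uj + uj * (h n).eval uj := by
          rw [hrec (n+2) (by omega)]
          simp [Nat.add_sub_cancel]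
        rw [show n+1+1 = n+2 from rfl, hE]
        rw [hβα, hujα] at hQ0 hQ1 ⊢
        push_cast
        linear_combination hQ1 + (α^2 - α) * hQ0
      · -- R (n+2)
        have hD : (h (n+3)).derivative.eval uj
            = (h (n+2)).derivative.eval uj + (h (n+1)).eval uj
              + uj * (h (n+1)).derivative.eval uj := by
          rw [hrec (n+3) (by omega)]
          simp only [show n+3-1 = n+2 from rfl, show n+3-2 = n+1 from rfl,
            Polynomial.derivative_add, Polynomial.derivative_mul, Polynomial.derivative_X,
            Polynomial.eval_add, Polynomial.eval_mul, Polynomial.eval_X, one_mul]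
          ring
        rw [show n+1+2 = n+3 from rfl, hD]
        rw [hsdef, hβα, hujα] at hQ1 hR0 hR1 ⊢
        push_cast at hR0 hR1 ⊢
        linear_combination hR1 + (α - (1-α))^2 * hQ1 + (α^2-α) * hR0
  -- endpoint
  have hj1 : j - 1 + 1 = j := by omega
  obtain ⟨⟨_, hRj⟩, ⟨hQj, _⟩⟩ := key (j - 1)
  rw [hj1] at hRj hQj
  have hjcast : ((j - 1 : ℕ) : ℂ) + 1 = (j : ℂ) := by
    push_cast [Nat.cast_sub (show 1 ≤ j by omega)]
    ring
  have hjθ : (j : ℂ) * ((θ : ℂ) * Complex.I) = (Real.pi : ℂ) * Complex.I := by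
    rw [hθdef]
    push_cast
    field_simp
  have hαj : α ^ j = (-1) / (2 * C) ^ j := by
    rw [hαdef, div_pow, ← Complex.exp_nat_mul, hjθ, Complex.exp_pi_mul_I]
  have hβj : β ^ j = (-1) / (2 * C) ^ j := by
    rw [hβdef, div_pow, ← Complex.exp_nat_mul]
    have e : (j : ℂ) * -((θ:ℂ) * Complex.I) = -((Real.pi : ℂ) * Complex.I) := by
      rw [← hjθ]; ring
    rw [e, Complex.exp_neg, Complex.exp_pi_mul_I]
    norm_num
  have hdiff : α ^ j - β ^ j = 0 := by rw [hαj, hβj]; ring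
  set φ : ℝ := ((j : ℝ) - 1) * Real.pi / j with hφdef
  have hφθ : ((j - 1 : ℕ) : ℝ) * θ = φ := by
    rw [hθdef, hφdef, Nat.cast_sub (show 1 ≤ j by omega)]
    push_cast
    field_simp
  clear_value φ
  have hpow : α ^ (j-1) + β ^ (j-1) = 2 * ((Real.cos φ : ℝ) : ℂ) / (2 * C) ^ (j-1) := by
    rw [hαdef, hβdef, div_pow, div_pow, ← add_div, ← Complex.exp_nat_mul,
      ← Complex.exp_nat_mul]
    congr 1
    have e1 : ((j-1:ℕ) : ℂ) * ((θ:ℂ) * Complex.I) = ((φ : ℝ) : ℂ) * Complex.I := by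
      rw [← hφθ]; push_cast; ring
    have e2 : ((j-1:ℕ) : ℂ) * -((θ:ℂ) * Complex.I) = ((-φ : ℝ) : ℂ) * Complex.I := by
      rw [← hφθ]; push_cast; ring
    rw [e1, e2, Complex.exp_mul_I, Complex.exp_mul_I]
    simp only [Complex.ofReal_neg, Complex.cos_neg, Complex.sin_neg,
      ← Complex.ofReal_cos, ← Complex.ofReal_sin]
    ring
  rw [hdiff, hpow] at hRj
  have hcφ : Real.cos φ = -c := by
    have e : φ = Real.pi - θ := by
      rw [hφdef, hθdef]
      field_simp
    rw [e, Real.cos_pi_sub, hcdef]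
  have hden : (2:ℂ) ^ (j-2) * (1 + 4*uj) * C ^ (j-1) ≠ 0 :=
    mul_ne_zero (mul_ne_zero (pow_ne_zero _ two_ne_zero) h1une) (pow_ne_zero _ hC0)
  have h2Cpow : ((2:ℂ) * C) ^ (j-1) = 2 * 2 ^ (j-2) * C ^ (j-1) := by
    rw [mul_pow]
    congr 1
    rw [show j - 1 = (j-2) + 1 by omega, pow_succ]
    ring
  have h2Cne : ((2:ℂ)*C) ^ (j-1) ≠ 0 := pow_ne_zero _ h2C0
  have hRj' : (h j).derivative.eval uj * s^3 * (2*C) ^ (j-1)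
      = (((j-1:ℕ):ℂ) + 1) * (2 * ((Real.cos φ : ℝ):ℂ)) * s := by
    rw [hRj]
    field_simp
    ring
  have hmain : (h j).derivative.eval uj
      = (j : ℂ) * ((Real.cos φ : ℝ) : ℂ) / (2 ^ (j-2) * (1 + 4*uj) * C ^ (j-1)) := by
    rw [eq_div_iff hden]
    have hc1 : ((h j).derivative.eval uj * (2^(j-2)*(1+4*uj)*C^(j-1))) * (2*s)
        = ((j:ℂ) * ((Real.cos φ : ℝ):ℂ)) * (2*s) := by
      linear_combination hRj' + (2*((Real.cos φ : ℝ):ℂ)*s) * hjcast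
        + (-((h j).derivative.eval uj) * s * 2 * 2^(j-2) * C^(j-1)) * hs2
        + (-((h j).derivative.eval uj) * s^3) * h2Cpow
    exact mul_right_cancel₀ (by simp [hsne] : (2:ℂ)*s ≠ 0) hc1
  refine ⟨hmain, ?_⟩
  rw [hmain]
  apply div_ne_zero
  · apply mul_ne_zero hjC
    rw [hcφ]
    simp only [ne_eq, Complex.ofReal_neg, neg_eq_zero, Complex.ofReal_eq_zero]
    exact ne_of_gt hcos
  · exact hden
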